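/- For K ∈ (0,1), the function (t,s) ↦ t^K + s^K - (t+s)^K on [0,∞)² is positive semidefinite, i.e., for all t₁,…,tₙ ≥ 0 and c₁,…,cₙ ∈ ℝ, ∑_{i,j} c_i c_j (t_i^K + t_j^K - (t_i+t_j)^K) ≥ 0. -/
import Mathlib


open Real Set Finset MeasureTheory

private lemma kps_integrable {K : ℝ} (hK0 : 0 < K) (hK1 : K < 1) {t : ℝ} (ht : 0 ≤ t) :
    IntegrableOn (fun x => (1 - Real.exp (-(x * t))) * x ^ (-1 - K)) (Ioi (0:ℝ)) := by
  have hmeas : Measurable (fun x : ℝ => (1 - Real.exp (-(x * t))) * x ^ (-1 - K)) := by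
    measurability
  rw [← Ioc_union_Ioi_eq_Ioi (zero_le_one (α := ℝ))]
  refine MeasureTheory.IntegrableOn.union ?_ ?_
  · -- on Ioc 0 1, dominate by t * x ^ (-K)
    have hdom : IntegrableOn (fun x : ℝ => t * x ^ (-K)) (Ioc (0:ℝ) 1) := by
      have := (intervalIntegral.intervalIntegrable_rpow' (a := 0) (b := 1)
        (r := -K) (by linarith)).const_mul t
      exact (intervalIntegrable_iff_integrableOn_Ioc_of_le zero_le_one).mp this
    refine MeasureTheory.Integrable.mono hdom hmeas.aestronglyMeasurable ?_
    refine Filter.eventually_of_mem (self_mem_ae_restrict measurableSet_Ioc) fun x hx => ?_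
    have hx0 : 0 < x := hx.1
    have he0 : 0 ≤ 1 - Real.exp (-(x * t)) := by
      have : Real.exp (-(x * t)) ≤ 1 := Real.exp_le_one_iff.mpr (by nlinarith)
      linarith
    have he1 : 1 - Real.exp (-(x * t)) ≤ x * t := by
      have := Real.add_one_le_exp (-(x * t)); linarith
    have hw : (0:ℝ) ≤ x ^ (-1 - K) := Real.rpow_nonneg hx0.le _
    have hpow : x * x ^ (-1 - K) = x ^ (-K) := by
      nth_rewrite 1 [← Real.rpow_one x]
      rw [← Real.rpow_add hx0]
      norm_num
      ring_nf
    rw [Real.norm_eq_abs, Real.norm_eq_abs, abs_of_nonneg (mul_nonneg he0 hw),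
      abs_of_nonneg (mul_nonneg ht (Real.rpow_nonneg hx0.le _))]
    calc (1 - Real.exp (-(x * t))) * x ^ (-1 - K)
        ≤ (x * t) * x ^ (-1 - K) := by nlinarith
      _ = t * (x * x ^ (-1 - K)) := by ring
      _ = t * x ^ (-K) := by rw [hpow]
  · -- on Ioi 1, dominate by x ^ (-1 - K)
    have hdom : IntegrableOn (fun x : ℝ => x ^ (-1 - K)) (Ioi (1:ℝ)) :=
      integrableOn_Ioi_rpow_of_lt (by linarith) one_pos
    refine MeasureTheory.Integrable.mono hdom hmeas.aestronglyMeasurable ?_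
    refine Filter.eventually_of_mem (self_mem_ae_restrict measurableSet_Ioi) fun x hx => ?_
    have hx0 : (0:ℝ) < x := lt_trans one_pos hx
    have he0 : 0 ≤ 1 - Real.exp (-(x * t)) := by
      have : Real.exp (-(x * t)) ≤ 1 := Real.exp_le_one_iff.mpr (by nlinarith)
      linarith
    have he1 : 1 - Real.exp (-(x * t)) ≤ 1 := by
      have := Real.exp_pos (-(x * t)); linarith
    have hw : (0:ℝ) ≤ x ^ (-1 - K) := Real.rpow_nonneg hx0.le _
    rw [Real.norm_eq_abs, Real.norm_eq_abs, abs_of_nonneg (mul_nonneg he0 hw),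
      abs_of_nonneg hw]
    nlinarith

private lemma kps_formula {K : ℝ} (hK0 : 0 < K) (hK1 : K < 1) {t : ℝ} (ht : 0 ≤ t) :
    ∫ x in Ioi (0:ℝ), (1 - Real.exp (-(x * t))) * x ^ (-1 - K)
      = t ^ K * ∫ x in Ioi (0:ℝ), (1 - Real.exp (-x)) * x ^ (-1 - K) := by
  rcases eq_or_lt_of_le ht with h0 | h0
  · simp [← h0, Real.zero_rpow hK0.ne']
  · have key := MeasureTheory.integral_comp_mul_left_Ioi
      (fun u => (1 - Real.exp (-u)) * u ^ (-1 - K)) 0 h0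
    simp only [mul_zero, smul_eq_mul] at key
    have h1 : EqOn (fun x : ℝ => (1 - Real.exp (-(x * t))) * x ^ (-1 - K))
        (fun x : ℝ => t ^ (1 + K) * ((1 - Real.exp (-(t * x))) * (t * x) ^ (-1 - K)))
        (Ioi (0:ℝ)) := by
      intro x hx
      have hx0 : (0:ℝ) < x := hx
      have hrp : t ^ (1 + K) * t ^ (-1 - K) = 1 := by
        rw [← Real.rpow_add h0]; norm_num
      simp only
      rw [Real.mul_rpow h0.le hx0.le, mul_comm t x]
      linear_combination (-((1 - Real.exp (-(x * t))) * x ^ (-1 - K))) * hrp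
    rw [setIntegral_congr_fun measurableSet_Ioi h1, MeasureTheory.integral_const_mul, key]
    have : t ^ (1 + K) * t⁻¹ = t ^ K := by
      rw [← Real.rpow_neg_one t, ← Real.rpow_add h0]; norm_num
    rw [← mul_assoc, this]

private lemma kps_I_pos {K : ℝ} (hK0 : 0 < K) (hK1 : K < 1) :
    0 < ∫ x in Ioi (0:ℝ), (1 - Real.exp (-x)) * x ^ (-1 - K) := by
  have hint : IntegrableOn (fun x : ℝ => (1 - Real.exp (-x)) * x ^ (-1 - K)) (Ioi 0) := by
    have h := kps_integrable hK0 hK1 (zero_le_one (α := ℝ))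
    simpa [mul_one] using h
  rw [setIntegral_pos_iff_support_of_nonneg_ae ?_ hint]
  · have hsub : Ioi (0:ℝ) ⊆ Function.support
        (fun x : ℝ => (1 - Real.exp (-x)) * x ^ (-1 - K)) := by
      intro x hx
      have hx0 : (0:ℝ) < x := hx
      have h1 : 0 < 1 - Real.exp (-x) := by
        have : Real.exp (-x) < 1 := Real.exp_lt_one_iff.mpr (by linarith)
        linarith
      have h2 : 0 < x ^ (-1 - K) := Real.rpow_pos_of_pos hx0 _
      exact ne_of_gt (mul_pos h1 h2)
    refine lt_of_lt_of_le ?_ (measure_mono (subset_inter hsub subset_rfl))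
    simp [Real.volume_Ioi]
  · refine Filter.eventually_of_mem (self_mem_ae_restrict measurableSet_Ioi)
      fun x hx => ?_
    have hx0 : (0:ℝ) < x := hx
    have h1 : Real.exp (-x) ≤ 1 := Real.exp_le_one_iff.mpr (by linarith)
    have h2 := Real.rpow_nonneg hx0.le (-1 - K)
    simp only [Pi.zero_apply]
    nlinarith

private lemma kps_prod_eq (a b x : ℝ) :
    (1 - Real.exp (-(x * a))) * (1 - Real.exp (-(x * b)))
      = (1 - Real.exp (-(x * a))) + (1 - Real.exp (-(x * b)))
        - (1 - Real.exp (-(x * (a + b)))) := by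
  have h : Real.exp (-(x * (a + b))) = Real.exp (-(x * a)) * Real.exp (-(x * b)) := by
    rw [← Real.exp_add]; ring_nf
  linear_combination -h

private lemma kps_cross_int {K : ℝ} (hK0 : 0 < K) (hK1 : K < 1) {a b : ℝ}
    (ha : 0 ≤ a) (hb : 0 ≤ b) :
    IntegrableOn (fun x => (1 - Real.exp (-(x * a))) * (1 - Real.exp (-(x * b)))
      * x ^ (-1 - K)) (Ioi (0:ℝ)) := by
  have hfun : (fun x : ℝ => (1 - Real.exp (-(x * a))) * (1 - Real.exp (-(x * b)))
      * x ^ (-1 - K))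
      = fun x : ℝ => ((1 - Real.exp (-(x * a))) * x ^ (-1 - K)
          + (1 - Real.exp (-(x * b))) * x ^ (-1 - K))
        - (1 - Real.exp (-(x * (a + b)))) * x ^ (-1 - K) := by
    funext x
    have := kps_prod_eq a b x
    linear_combination x ^ (-1 - K) * this
  rw [hfun]
  exact ((kps_integrable hK0 hK1 ha).add (kps_integrable hK0 hK1 hb)).sub
    (kps_integrable hK0 hK1 (add_nonneg ha hb))

private lemma kps_cross_val {K : ℝ} (hK0 : 0 < K) (hK1 : K < 1) {a b : ℝ}
    (ha : 0 ≤ a) (hb : 0 ≤ b) :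
    ∫ x in Ioi (0:ℝ), (1 - Real.exp (-(x * a))) * (1 - Real.exp (-(x * b)))
        * x ^ (-1 - K)
      = (a ^ K + b ^ K - (a + b) ^ K)
        * ∫ x in Ioi (0:ℝ), (1 - Real.exp (-x)) * x ^ (-1 - K) := by
  have hfun : (fun x : ℝ => (1 - Real.exp (-(x * a))) * (1 - Real.exp (-(x * b)))
      * x ^ (-1 - K))
      = fun x : ℝ => ((1 - Real.exp (-(x * a))) * x ^ (-1 - K)
          + (1 - Real.exp (-(x * b))) * x ^ (-1 - K))
        - (1 - Real.exp (-(x * (a + b)))) * x ^ (-1 - K) := by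
    funext x
    have := kps_prod_eq a b x
    linear_combination x ^ (-1 - K) * this
  have hadd : Integrable (fun x : ℝ => (1 - Real.exp (-(x * a))) * x ^ (-1 - K)
      + (1 - Real.exp (-(x * b))) * x ^ (-1 - K)) (volume.restrict (Ioi (0:ℝ))) :=
    (kps_integrable hK0 hK1 ha).add (kps_integrable hK0 hK1 hb)
  rw [hfun, MeasureTheory.integral_sub hadd
      (kps_integrable hK0 hK1 (add_nonneg ha hb)),
    MeasureTheory.integral_add (kps_integrable hK0 hK1 ha) (kps_integrable hK0 hK1 hb),
    kps_formula hK0 hK1 ha, kps_formula hK0 hK1 hb,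
    kps_formula hK0 hK1 (add_nonneg ha hb)]
  ring

theorem kernel_posSemidef (K : ℝ) (hK : K ∈ Set.Ioo (0:ℝ) 1)
    (n : ℕ) (t : Fin n → ℝ) (ht : ∀ i, 0 ≤ t i) (c : Fin n → ℝ) :
    0 ≤ ∑ i, ∑ j, c i * c j * ((t i) ^ K + (t j) ^ K - (t i + t j) ^ K) := by
  obtain ⟨hK0, hK1⟩ := hK
  set I := ∫ x in Ioi (0:ℝ), (1 - Real.exp (-x)) * x ^ (-1 - K) with hIdef
  have hIpos : 0 < I := kps_I_pos hK0 hK1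
  have key : (∑ i, ∑ j, c i * c j * ((t i) ^ K + (t j) ^ K - (t i + t j) ^ K)) * I
      = ∫ x in Ioi (0:ℝ),
          (∑ i, c i * (1 - Real.exp (-(x * t i)))) ^ 2 * x ^ (-1 - K) := by
    have hterm : ∀ i j : Fin n,
        c i * c j * ((t i) ^ K + (t j) ^ K - (t i + t j) ^ K) * I
        = ∫ x in Ioi (0:ℝ), c i * c j * ((1 - Real.exp (-(x * t i)))
            * (1 - Real.exp (-(x * t j))) * x ^ (-1 - K)) := by
      intro i j
      rw [MeasureTheory.integral_const_mul, kps_cross_val hK0 hK1 (ht i) (ht j)]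
      ring
    rw [Finset.sum_mul]
    simp_rw [Finset.sum_mul]
    have hint : ∀ i j : Fin n, Integrable
        (fun x => c i * c j * ((1 - Real.exp (-(x * t i)))
          * (1 - Real.exp (-(x * t j))) * x ^ (-1 - K)))
        (volume.restrict (Ioi (0:ℝ))) := fun i j =>
      (kps_cross_int hK0 hK1 (ht i) (ht j)).const_mul _
    calc ∑ i, ∑ j, c i * c j * ((t i) ^ K + (t j) ^ K - (t i + t j) ^ K) * I
        = ∑ i, ∑ j, ∫ x in Ioi (0:ℝ), c i * c j * ((1 - Real.exp (-(x * t i)))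
            * (1 - Real.exp (-(x * t j))) * x ^ (-1 - K)) := by
          exact Finset.sum_congr rfl fun i _ => Finset.sum_congr rfl fun j _ => hterm i j
      _ = ∑ i, ∫ x in Ioi (0:ℝ), ∑ j, c i * c j * ((1 - Real.exp (-(x * t i)))
            * (1 - Real.exp (-(x * t j))) * x ^ (-1 - K)) := by
          exact Finset.sum_congr rfl fun i _ =>
            (MeasureTheory.integral_finset_sum _ fun j _ => hint i j).symm
      _ = ∫ x in Ioi (0:ℝ), ∑ i, ∑ j, c i * c j * ((1 - Real.exp (-(x * t i)))
            * (1 - Real.exp (-(x * t j))) * x ^ (-1 - K)) := by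
          exact (MeasureTheory.integral_finset_sum _ fun i _ =>
            MeasureTheory.integrable_finset_sum _ fun j _ => hint i j).symm
      _ = ∫ x in Ioi (0:ℝ),
            (∑ i, c i * (1 - Real.exp (-(x * t i)))) ^ 2 * x ^ (-1 - K) := by
          apply MeasureTheory.integral_congr_ae
          filter_upwards with x
          rw [sq, Finset.sum_mul_sum, Finset.sum_mul]
          refine Finset.sum_congr rfl fun i _ => ?_
          rw [Finset.sum_mul]
          exact Finset.sum_congr rfl fun j _ => by ring
  have hnn : 0 ≤ (∑ i, ∑ j, c i * c j
      * ((t i) ^ K + (t j) ^ K - (t i + t j) ^ K)) * I := by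
    rw [key]
    refine setIntegral_nonneg measurableSet_Ioi fun x hx => ?_
    exact mul_nonneg (sq_nonneg _) (Real.rpow_nonneg (le_of_lt hx) _)
  by_contra hneg
  push_neg at hneg
  nlinarith
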